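/- For fixed nonnegative integers a and j, the sequence (n!/n^{n−1}) · (1/(n−a)) · (n−a)^{n−a−j} / (n−a−j)! converges to e^{−a} as n → ∞. -/

import Mathlib

open scoped Nat
open Filter

private noncomputable def hh (n : ℕ) : ℝ := (n ! : ℝ) / (n : ℝ) ^ (n - 1)

private lemma hh_pos (n : ℕ) : 0 < hh n := by
  unfold hh
  apply div_pos (by positivity)
  cases n with
  | zero => simp
  | succ m => positivity

private lemma gpow (j : ℕ) :
    Tendsto (fun k : ℕ => (((k : ℝ) + j) / (k : ℝ)) ^ (k - 1)) atTop
      (nhds (Real.exp j)) := by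
  have h1 : Tendsto (fun k : ℕ => (1 + (j : ℝ) / k) ^ k) atTop (nhds (Real.exp j)) :=
    Real.tendsto_one_add_div_pow_exp j
  have h2 : Tendsto (fun k : ℕ => (1 : ℝ) + (j : ℝ) / k) atTop (nhds 1) := by
    have := tendsto_natCast_atTop_atTop (R := ℝ)
    simpa using ((tendsto_const_div_atTop_nhds_zero_nat (j : ℝ)).const_add 1)
  have h3 : Tendsto (fun k : ℕ => (1 + (j : ℝ) / k) ^ k / (1 + (j : ℝ) / k)) atTop
      (nhds (Real.exp j)) := by
    have := h1.div h2 (by norm_num); rw [div_one] at this; exact this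
  refine h3.congr' ?_
  filter_upwards [eventually_ge_atTop 1] with k hk
  have hk0 : (k : ℝ) ≠ 0 := by positivity
  have hke : (1 : ℝ) + (j : ℝ) / k = ((k : ℝ) + j) / k := by field_simp
  rw [hke]
  have hkpos : (0:ℝ) < ((k : ℝ) + j) / k := by positivity
  rw [eq_comm, pow_sub₀ _ (ne_of_gt hkpos) hk, pow_one]; exact (div_eq_mul_inv _ _).symm

private lemma ratio_lim :
    Tendsto (fun n : ℕ => hh (n + 1) / hh n) atTop (nhds (Real.exp (-1))) := by
  have h2 := (gpow 1).inv₀ (Real.exp_pos _).ne'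
  simp only [Nat.cast_one] at h2
  have h2' : Tendsto (fun k : ℕ => ((((k : ℝ) + 1) / (k : ℝ)) ^ (k - 1))⁻¹) atTop
      (nhds (Real.exp (-1))) := by
    rwa [← Real.exp_neg] at h2
  refine h2'.congr' ?_
  filter_upwards [eventually_ge_atTop 1] with k hk
  have hk0 : (k : ℝ) ≠ 0 := by
    exact Nat.cast_ne_zero.mpr (by omega)
  have hk1 : (0:ℝ) < (k:ℝ) + 1 := by positivity
  unfold hh
  rw [← inv_pow, inv_div]
  have e1 : ((k + 1)! : ℝ) = ((k : ℝ) + 1) * (k ! : ℝ) := by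
    push_cast [Nat.factorial_succ]; ring
  have e2 : ((k : ℝ) + 1) ^ ((k + 1) - 1) = ((k : ℝ) + 1) * ((k : ℝ) + 1) ^ (k - 1) := by
    have : (k + 1) - 1 = (k - 1) + 1 := by omega
    rw [this, pow_succ]; ring
  have hkcast : ((k + 1 : ℕ) : ℝ) = (k : ℝ) + 1 := by push_cast; ring
  rw [hkcast, e1, e2, div_pow]
  have hfk : (k ! : ℝ) ≠ 0 := by positivity
  have hkp : ((k:ℝ) + 1) ^ (k-1) ≠ 0 := by positivity
  field_simp

private lemma shift_lim (c : ℕ) :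
    Tendsto (fun n : ℕ => hh n / hh (n - c)) atTop (nhds (Real.exp (-(c : ℝ)))) := by
  induction c with
  | zero =>
    simp only [Nat.sub_zero, div_self (hh_pos _).ne', Nat.cast_zero, neg_zero, Real.exp_zero]
    exact tendsto_const_nhds
  | succ c ih =>
    have hr : Tendsto (fun n : ℕ => hh (n - c) / hh (n - c - 1)) atTop
        (nhds (Real.exp (-1))) := by
      have hsub : Tendsto (fun n : ℕ => n - c) atTop atTop := tendsto_sub_atTop_nat c
      have base : Tendsto (fun m : ℕ => hh m / hh (m - 1)) atTop (nhds (Real.exp (-1))) := by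
        have := ratio_lim.comp (tendsto_sub_atTop_nat 1)
        refine this.congr' ?_
        filter_upwards [eventually_ge_atTop 1] with m hm
        have : m - 1 + 1 = m := by omega
        simp [Function.comp, this]
      exact base.comp hsub
    have : Tendsto (fun n : ℕ => (hh n / hh (n - c)) * (hh (n - c) / hh (n - c - 1))) atTop
        (nhds (Real.exp (-(c : ℝ)) * Real.exp (-1))) := ih.mul hr
    rw [← Real.exp_add] at this
    have heq : -(c : ℝ) + -1 = -((c : ℕ) + 1 : ℕ) := by push_cast; ring
    rw [heq] at this
    refine this.congr fun n => ?_
    rw [div_mul_div_cancel₀]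
    · rfl
    · exact (hh_pos _).ne'

theorem stmt_15 (a j : ℕ) :
    Tendsto
      (fun n : ℕ =>
        ((n ! : ℝ) / (n : ℝ) ^ (n - 1)) * (1 / ((n - a : ℕ) : ℝ)) *
          ((n - a : ℕ) : ℝ) ^ (n - a - j) / ((n - a - j)! : ℝ))
      atTop (nhds (Real.exp (-(a : ℝ)))) := by
  have hfac : Tendsto
      (fun n : ℕ => (((n - a : ℕ) : ℝ) / ((n - a - j : ℕ) : ℝ)) ^ (n - a - j - 1)) atTop
      (nhds (Real.exp j)) := by
    have hsub : Tendsto (fun n : ℕ => n - a - j) atTop atTop :=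
      (tendsto_sub_atTop_nat j).comp (tendsto_sub_atTop_nat a)
    have := (gpow j).comp hsub
    refine this.congr' ?_
    filter_upwards [eventually_ge_atTop (a + j)] with n hn
    have hcast : ((n - a - j : ℕ) : ℝ) + j = ((n - a : ℕ) : ℝ) := by
      have h1 : n - a - j + j = n - a := by omega
      exact_mod_cast congrArg (Nat.cast : ℕ → ℝ) h1
    simp only [Function.comp]
    rw [hcast]
  have hmain : Tendsto
      (fun n : ℕ => (hh n / hh (n - (a + j))) *
        (((n - a : ℕ) : ℝ) / ((n - a - j : ℕ) : ℝ)) ^ (n - a - j - 1)) atTop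
      (nhds (Real.exp (-((a + j : ℕ) : ℝ)) * Real.exp j)) :=
    (shift_lim (a + j)).mul hfac
  rw [← Real.exp_add] at hmain
  have heq : -((a + j : ℕ) : ℝ) + j = -(a : ℝ) := by push_cast; ring
  rw [heq] at hmain
  refine hmain.congr' ?_
  filter_upwards [eventually_ge_atTop (a + j + 1)] with n hn
  have h1 : n - (a + j) = n - a - j := by omega
  have h2 : n - a - j - 1 + 1 = n - a - j := by omega
  have hm_pos : 0 < n - a := by omega
  have hmj_pos : 0 < n - a - j := by omega
  have hmR : (0:ℝ) < ((n - a : ℕ) : ℝ) := by exact_mod_cast hm_pos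
  have hmjR : (0:ℝ) < ((n - a - j : ℕ) : ℝ) := by exact_mod_cast hmj_pos
  unfold hh
  rw [h1]
  have hnpowpos : (0:ℝ) < (n : ℝ) ^ (n - 1) := by
    have : 0 < n := by omega
    positivity
  have hfacpos : (0:ℝ) < ((n - a - j)! : ℝ) := by positivity
  rw [div_pow]
  have hmexp : ((n - a : ℕ) : ℝ) ^ (n - a - j) =
      ((n - a : ℕ) : ℝ) ^ (n - a - j - 1) * ((n - a : ℕ) : ℝ) := by
    rw [← pow_succ, h2]
  have hmjexp : ((n - a - j : ℕ) : ℝ) ^ (n - a - j - 1) ≠ 0 := by positivity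
  field_simp
  rw [hmexp]
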